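/- Let L̂ ∈ ℝ^{rn×rn} be an arbitrary symmetric matrix. If Y is a second-order critical point of the rank-p problem min{⟨L̂, Y Yᵀ⟩ : Y feasible} and Y is rank-deficient (rank(Y) < p), then S(Y) is positive semidefinite; consequently Y Yᵀ is an optimal solution of the SDP relaxation and Y is a global minimizer of the rank-p problem. -/

import Mathlib

open Matrix MeasureTheory ProbabilityTheory
open scoped Kronecker BigOperators

namespace SyncPaper

variable {α : Type*}

/-- The `i`-th `r × p` row-block of a block matrix `Y ∈ α^{rn × p}`. -/
def blk {n r p : ℕ} (Y : Matrix (Fin n × Fin r) (Fin p) α) (i : Fin n) :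
    Matrix (Fin r) (Fin p) α :=
  Matrix.of fun a b => Y (i, a) b

/-- `Y` is feasible: every `r × p` row-block has orthonormal rows. -/
def Feasible {n r p : ℕ} (Y : Matrix (Fin n × Fin r) (Fin p) ℝ) : Prop :=
  ∀ i, blk Y i * (blk Y i)ᵀ = 1

/-- Symmetric block-diagonal projection: keeps the symmetric part of each `r × r`
diagonal block and zeroes out all off-diagonal blocks. -/
noncomputable def SBD {n r : ℕ} (M : Matrix (Fin n × Fin r) (Fin n × Fin r) ℝ) :
    Matrix (Fin n × Fin r) (Fin n × Fin r) ℝ :=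
  Matrix.of fun q q' => if q.1 = q'.1 then (M q q' + M q' q) / 2 else 0

/-- The matrix `S(Y) = L̂ − SBD(L̂ Y Yᵀ)`. -/
noncomputable def Smat {n r p : ℕ} (Lhat : Matrix (Fin n × Fin r) (Fin n × Fin r) ℝ)
    (Y : Matrix (Fin n × Fin r) (Fin p) ℝ) :
    Matrix (Fin n × Fin r) (Fin n × Fin r) ℝ :=
  Lhat - SBD (Lhat * Y * Yᵀ)

/-- Second-order critical point of the rank-`p` problem `min ⟨L̂, Y Yᵀ⟩` over feasible `Y`. -/
def IsSecondOrderCritical {n r p : ℕ} (Lhat : Matrix (Fin n × Fin r) (Fin n × Fin r) ℝ)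
    (Y : Matrix (Fin n × Fin r) (Fin p) ℝ) : Prop :=
  Feasible Y ∧ Smat Lhat Y * Y = 0 ∧
    ∀ Ydot : Matrix (Fin n × Fin r) (Fin p) ℝ,
      (∀ i, blk Ydot i * (blk Y i)ᵀ + blk Y i * (blk Ydot i)ᵀ = 0) →
      0 ≤ (Smat Lhat Y * Ydot * Ydotᵀ).trace

/-- The stacked ground truth `Z ∈ ℝ^{rn × r}`. -/
def Zstack {n r : ℕ} (Zb : Fin n → Matrix (Fin r) (Fin r) ℝ) :
    Matrix (Fin n × Fin r) (Fin r) ℝ :=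
  Matrix.of fun q b => Zb q.1 q.2 b

/-- The block-diagonal matrix `D` with diagonal blocks `Z_1, …, Z_n`. -/
def Dmat {n r : ℕ} (Zb : Fin n → Matrix (Fin r) (Fin r) ℝ) :
    Matrix (Fin n × Fin r) (Fin n × Fin r) ℝ :=
  Matrix.of fun q q' => if q.1 = q'.1 then Zb q.1 q.2 q'.2 else 0

/-- `L_Z = D (L ⊗ I_r) Dᵀ`. -/
def LZmat {n r : ℕ} (L : Matrix (Fin n) (Fin n) ℝ) (Zb : Fin n → Matrix (Fin r) (Fin r) ℝ) :
    Matrix (Fin n × Fin r) (Fin n × Fin r) ℝ :=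
  Dmat Zb * (L ⊗ₖ (1 : Matrix (Fin r) (Fin r) ℝ)) * (Dmat Zb)ᵀ

/-- The ℓ₂→ℓ₂ operator norm of a matrix. -/
noncomputable def opNorm {m m' : Type*} [Fintype m] [Fintype m'] [DecidableEq m']
    (M : Matrix m m' ℝ) : ℝ :=
  ‖(Matrix.toEuclideanLin (𝕜 := ℝ) (m := m) (n := m')).trans
      LinearMap.toContinuousLinearMap M‖

/-- The second-smallest eigenvalue of a connected graph Laplacian, via the variational
(Courant–Fischer) characterization: the minimum of the quadratic form over unit vectors
orthogonal to the all-ones vector. -/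
noncomputable def lam2 {n : ℕ} (L : Matrix (Fin n) (Fin n) ℝ) : ℝ :=
  sInf {t : ℝ | ∃ x : Fin n → ℝ, (∑ i, x i = 0) ∧ (∑ i, (x i) ^ 2 = 1) ∧ t = x ⬝ᵥ (L *ᵥ x)}

/-- Squared Frobenius norm of a real matrix. -/
def frobSq {m m' : Type*} [Fintype m] [Fintype m'] (M : Matrix m m' ℝ) : ℝ :=
  ∑ i, ∑ j, (M i j) ^ 2

/-- The inner product `⟨A, B⟩ = tr(A Bᵀ)`. -/
def ip {m : Type*} [Fintype m] (A B : Matrix m m ℝ) : ℝ := (A * Bᵀ).trace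

/-- Feasibility for the SDP relaxation. -/
def SDPFeasible {n r : ℕ} (X : Matrix (Fin n × Fin r) (Fin n × Fin r) ℝ) : Prop :=
  X.PosSemidef ∧ SBD X = 1

end SyncPaper

namespace SyncPaper

lemma ip_eq_sum {m : Type*} [Fintype m] (A B : Matrix m m ℝ) :
    ip A B = ∑ q, ∑ q', A q q' * B q q' := by
  simp [ip, Matrix.trace, Matrix.mul_apply, Matrix.diag]

lemma SBD_transpose {n r : ℕ} (M : Matrix (Fin n × Fin r) (Fin n × Fin r) ℝ) :
    (SBD M)ᵀ = SBD M := by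
  ext q q'
  simp only [SBD, Matrix.transpose_apply, Matrix.of_apply]
  rcases eq_or_ne q.1 q'.1 with h | h
  · rw [if_pos h.symm, if_pos h]; ring
  · rw [if_neg (Ne.symm h), if_neg h]

lemma ip_SBD_left {n r : ℕ} (M X : Matrix (Fin n × Fin r) (Fin n × Fin r) ℝ) :
    ip (SBD M) X = ip M (SBD X) := by
  rw [ip_eq_sum, ip_eq_sum]
  have h1 : ∀ q q' : Fin n × Fin r, SBD M q q' * X q q' =
      (if q.1 = q'.1 then M q q' * X q q' / 2 else 0) +
      (if q.1 = q'.1 then M q' q * X q q' / 2 else 0) := by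
    intro q q'
    simp only [SBD, Matrix.of_apply]
    split <;> ring
  have h2 : ∀ q q' : Fin n × Fin r, M q q' * SBD X q q' =
      (if q.1 = q'.1 then M q q' * X q q' / 2 else 0) +
      (if q.1 = q'.1 then M q q' * X q' q / 2 else 0) := by
    intro q q'
    simp only [SBD, Matrix.of_apply]
    split <;> ring
  simp_rw [h1, h2, Finset.sum_add_distrib]
  congr 1
  rw [Finset.sum_comm]
  refine Finset.sum_congr rfl fun a _ => Finset.sum_congr rfl fun b _ => ?_
  simp [eq_comm]

lemma ip_psd_nonneg {m : Type*} [Fintype m] [DecidableEq m]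
    {S X : Matrix m m ℝ} (hS : S.PosSemidef) (hX : X.PosSemidef) : 0 ≤ ip S X := by
  obtain ⟨B, rfl⟩ : ∃ B : Matrix m m ℝ, X = Bᴴ * B := by
    open scoped MatrixOrder Matrix.Norms.L2Operator in
    obtain ⟨B, hB⟩ := CStarAlgebra.nonneg_iff_eq_star_mul_self.mp hX.nonneg
    exact ⟨B, hB⟩
  have hBH : (Bᴴ : Matrix m m ℝ) = Bᵀ := by ext i j; simp
  rw [hBH, ip_eq_sum]
  have h1 : ∀ q q' : m, S q q' * (Bᵀ * B) q q' = ∑ i, B i q * (S q q' * B i q') := by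
    intro q q'
    rw [Matrix.mul_apply, Finset.mul_sum]
    exact Finset.sum_congr rfl fun i _ => by simp only [Matrix.transpose_apply]; ring
  simp_rw [h1]
  have h2 : (∑ q : m, ∑ q' : m, ∑ i : m, B i q * (S q q' * B i q')) =
      ∑ i : m, ∑ q : m, ∑ q' : m, B i q * (S q q' * B i q') := by
    rw [show (∑ q : m, ∑ q' : m, ∑ i : m, B i q * (S q q' * B i q')) =
        ∑ q : m, ∑ i : m, ∑ q' : m, B i q * (S q q' * B i q') from
      Finset.sum_congr rfl fun q _ => Finset.sum_comm]
    exact Finset.sum_comm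
  rw [h2]
  refine Finset.sum_nonneg fun i _ => ?_
  have := hS.dotProduct_mulVec_nonneg (fun j => B i j)
  simpa [dotProduct, Matrix.mulVec, Finset.mul_sum] using this

/-- **Lemma 3.1 (rank-deficient second-order critical points are global optima).**  For an
arbitrary symmetric cost matrix `L̂`, if `Y` is a rank-deficient second-order critical point
of the rank-`p` problem, then `S(Y) ⪰ 0`, `Y Yᵀ` is an optimal solution of the SDP relaxation,
and `Y` is a global minimizer of the rank-`p` problem. -/
theorem rank_deficient_soc_is_global
    (n r p : ℕ) (hn : 1 ≤ n) (hr : 1 ≤ r) (hrp : r ≤ p)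
    (Lhat : Matrix (Fin n × Fin r) (Fin n × Fin r) ℝ) (hLhatSym : Lhatᵀ = Lhat)
    (Y : Matrix (Fin n × Fin r) (Fin p) ℝ)
    (hY : IsSecondOrderCritical Lhat Y)
    (hrank : Y.rank < p) :
    (Smat Lhat Y).PosSemidef ∧
    (∀ X : Matrix (Fin n × Fin r) (Fin n × Fin r) ℝ, SDPFeasible X →
      ip Lhat (Y * Yᵀ) ≤ ip Lhat X) ∧
    (∀ Y' : Matrix (Fin n × Fin r) (Fin p) ℝ, Feasible Y' →
      ip Lhat (Y * Yᵀ) ≤ ip Lhat (Y' * Y'ᵀ)) := by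
  obtain ⟨hfeas, hfirst, hsoc⟩ := hY
  -- a nonzero kernel vector of Y
  have hker : ∃ v : Fin p → ℝ, v ≠ 0 ∧ Y.mulVec v = 0 := by
    by_contra hcon
    push_neg at hcon
    have hinj : Function.Injective Y.mulVecLin := by
      rw [← LinearMap.ker_eq_bot, LinearMap.ker_eq_bot']
      intro v hv
      by_contra hv0
      exact hcon v hv0 (by simpa [Matrix.mulVecLin_apply] using hv)
    have hrk : Y.rank = p := by
      rw [Matrix.rank, LinearMap.finrank_range_of_inj hinj, Module.finrank_fin_fun]
    omega
  obtain ⟨v, hv0, hYv⟩ := hker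
  have hvv : 0 < v ⬝ᵥ v := by
    have hnn : 0 ≤ v ⬝ᵥ v := Finset.sum_nonneg fun i _ => mul_self_nonneg (v i)
    rcases lt_or_eq_of_le hnn with h | h
    · exact h
    · exact absurd (dotProduct_self_eq_zero.mp h.symm) hv0
  set S := Smat Lhat Y with hSdef
  have hsym : Sᵀ = S := by
    rw [hSdef, Smat, Matrix.transpose_sub, hLhatSym, SBD_transpose]
  have hherm : S.IsHermitian := by
    have h : Sᴴ = Sᵀ := by ext i j; simp [Matrix.conjTranspose_apply]
    unfold Matrix.IsHermitian
    rw [h, hsym]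
  have hpsd : S.PosSemidef := by
    refine Matrix.PosSemidef.of_dotProduct_mulVec_nonneg hherm fun z => ?_
    have hz0 : ∀ i, blk (Matrix.vecMulVec z v) i * (blk Y i)ᵀ = 0 := by
      intro i
      ext a b
      simp only [Matrix.mul_apply, blk, Matrix.of_apply, Matrix.transpose_apply,
        Matrix.vecMulVec_apply, Matrix.zero_apply]
      have h1 : ∑ c, z (i, a) * v c * Y (i, b) c = z (i, a) * Y.mulVec v (i, b) := by
        rw [Matrix.mulVec, dotProduct, Finset.mul_sum]
        exact Finset.sum_congr rfl fun c _ => by ring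
      rw [h1, hYv]
      simp
    have hconstraint : ∀ i, blk (Matrix.vecMulVec z v) i * (blk Y i)ᵀ +
        blk Y i * (blk (Matrix.vecMulVec z v) i)ᵀ = 0 := by
      intro i
      have hz2 : blk Y i * (blk (Matrix.vecMulVec z v) i)ᵀ = 0 := by
        have := congrArg Matrix.transpose (hz0 i)
        simpa [Matrix.transpose_mul, Matrix.transpose_transpose] using this
      rw [hz0 i, hz2, add_zero]
    have htr := hsoc (Matrix.vecMulVec z v) hconstraint
    have hYdot : Matrix.vecMulVec z v * (Matrix.vecMulVec z v)ᵀ =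
        (v ⬝ᵥ v) • Matrix.vecMulVec z z := by
      ext a b
      simp only [Matrix.mul_apply, Matrix.vecMulVec_apply, Matrix.transpose_apply,
        Matrix.smul_apply, smul_eq_mul, dotProduct]
      rw [Finset.sum_mul]
      exact Finset.sum_congr rfl fun c _ => by ring
    have htrace : (S * Matrix.vecMulVec z v * (Matrix.vecMulVec z v)ᵀ).trace =
        (v ⬝ᵥ v) * (z ⬝ᵥ S *ᵥ z) := by
      rw [Matrix.mul_assoc, hYdot, Matrix.mul_smul, Matrix.trace_smul, smul_eq_mul]
      congr 1
      simp only [Matrix.trace, Matrix.diag, Matrix.mul_apply, Matrix.vecMulVec_apply,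
        dotProduct, Matrix.mulVec, Finset.mul_sum]
      refine Finset.sum_congr rfl fun q _ => Finset.sum_congr rfl fun q' _ => by ring
    rw [htrace] at htr
    have hnn : 0 ≤ z ⬝ᵥ S *ᵥ z := by nlinarith
    simpa using hnn
  have hmain : ∀ X : Matrix (Fin n × Fin r) (Fin n × Fin r) ℝ, SDPFeasible X →
      ip Lhat (Y * Yᵀ) ≤ ip Lhat X := by
    intro X hX
    obtain ⟨hXpsd, hXsbd⟩ := hX
    have hsplit : ip Lhat X = ip S X + ip (SBD (Lhat * Y * Yᵀ)) X := by
      rw [hSdef, Smat, ip, ip, ip, Matrix.sub_mul, Matrix.trace_sub]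
      ring
    have h2 : ip (SBD (Lhat * Y * Yᵀ)) X = ip Lhat (Y * Yᵀ) := by
      rw [ip_SBD_left, hXsbd, ip, ip, Matrix.transpose_one, Matrix.mul_one,
        Matrix.transpose_mul, Matrix.transpose_transpose, ← Matrix.mul_assoc]
    have h3 := ip_psd_nonneg hpsd hXpsd
    linarith [hsplit, h2, h3]
  refine ⟨hpsd, hmain, fun Y' hY' => ?_⟩
  apply hmain
  constructor
  · have h := Matrix.posSemidef_self_mul_conjTranspose Y'
    have hH : Y'ᴴ = Y'ᵀ := by ext i j; simp
    rwa [hH] at h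
  · ext ⟨i, a⟩ ⟨j, b⟩
    simp only [SBD, Matrix.of_apply]
    by_cases h : i = j
    · subst h
      have hblk : ∀ a b : Fin r, (Y' * Y'ᵀ) (i, a) (i, b) =
          (1 : Matrix (Fin r) (Fin r) ℝ) a b := by
        intro a b
        have := congrFun (congrFun (hY' i) a) b
        simpa [Matrix.mul_apply, blk, Matrix.transpose_apply] using this
      simp only [if_pos rfl, hblk]
      by_cases hab : a = b
      · subst hab; simp [Matrix.one_apply]
      · simp [Matrix.one_apply, hab, Ne.symm hab, Prod.ext_iff]
    · simp [h, Matrix.one_apply, Prod.ext_iff]
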